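/- Let A_1, A_2, ω, R_1, R_2, ρ_0 > 0 with R_1 > R_2, set α = (A_2R_2²/(A_1R_1(R_1 − R_2)))·exp(((2 + ω)(R_1 − R_2) − R_2)/R_2), and define h(ρ) = A_1(1 − ωρ/(R_1ρ_0))·exp(−R_1ρ_0/ρ) + A_2(1 − ωρ/(R_2ρ_0))·exp(−R_2ρ_0/ρ) for ρ > 0. Then h'(ρ) → 0 as ρ → 0⁺, and h'(ρ) ≥ 0 for every ρ with 0 < ρ ≤ R_1ρ_0/(2 + ω + α). -/

import Mathlib

open Set Filter

/-- The reference function of the JWL equation of state, written in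
Mie-Grüneisen form `p = ωρe + h(ρ)`. -/
noncomputable def jwlH (A1 A2 ω R1 R2 ρ0 : ℝ) : ℝ → ℝ :=
  fun ρ =>
    A1 * (1 - ω * ρ / (R1 * ρ0)) * Real.exp (-(R1 * ρ0 / ρ))
      + A2 * (1 - ω * ρ / (R2 * ρ0)) * Real.exp (-(R2 * ρ0 / ρ))


lemma jwl_hasDerivAt_expc (c ρ : ℝ) (hρ : ρ ≠ 0) :
    HasDerivAt (fun x : ℝ => Real.exp (-(c / x))) (Real.exp (-(c / ρ)) * (c / ρ ^ 2)) ρ := by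
  have h1 : HasDerivAt (fun x : ℝ => -(c / x)) (c / ρ ^ 2) ρ := by
    have h : HasDerivAt (fun x : ℝ => -(c * x⁻¹)) (-(c * -(ρ ^ 2)⁻¹)) ρ := ((hasDerivAt_inv hρ).const_mul c).neg
    have hfun : (fun x : ℝ => -(c * x⁻¹)) = fun x : ℝ => -(c / x) := by
      funext x; rw [div_eq_mul_inv]
    rw [hfun] at h
    convert h using 1
    field_simp
  exact h1.exp

lemma jwl_hasDerivAt_term (A ω c ρ : ℝ) (hc : c ≠ 0) (hρ : ρ ≠ 0) :
    HasDerivAt (fun x : ℝ => A * (1 - ω * x / c) * Real.exp (-(c / x)))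
      (A * Real.exp (-(c / ρ)) * (c / ρ ^ 2 - ω / ρ - ω / c)) ρ := by
  have he := jwl_hasDerivAt_expc c ρ hρ
  have hp : HasDerivAt (fun x : ℝ => A * (1 - ω * x / c)) (A * (-(ω / c))) ρ := by
    have h0 : HasDerivAt (fun x : ℝ => 1 - ω * x / c) (-(ω / c)) ρ := by
      have h := (((hasDerivAt_id ρ).const_mul ω).div_const c).const_sub 1
      simpa using h
    exact h0.const_mul A
  have h : HasDerivAt (fun x : ℝ => A * (1 - ω * x / c) * Real.exp (-(c / x))) _ ρ := hp.mul he
  convert h using 1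
  field_simp
  ring

lemma jwl_hasDerivAt_Fterm (A ω c ρ : ℝ) (hc : c ≠ 0) (hρ : ρ ≠ 0) :
    HasDerivAt (fun x : ℝ => A * Real.exp (-(c / x)) * (c / x ^ 2 - ω / x - ω / c))
      (A * c * Real.exp (-(c / ρ)) * (c - (2 + ω) * ρ) / ρ ^ 4) ρ := by
  have he := (jwl_hasDerivAt_expc c ρ hρ).const_mul A
  have h1 : HasDerivAt (fun x : ℝ => c / x ^ 2) (-(2 * c / ρ ^ 3)) ρ := by
    have h : HasDerivAt (fun x : ℝ => c * (x ^ 2)⁻¹) (c * (-(((2:ℕ):ℝ) * ρ ^ (2 - 1)) / (ρ ^ 2) ^ 2)) ρ := ((hasDerivAt_pow 2 ρ).inv (pow_ne_zero 2 hρ)).const_mul c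
    have hfun : (fun x : ℝ => c * (x ^ 2)⁻¹) = fun x : ℝ => c / x ^ 2 := by
      funext x; rw [div_eq_mul_inv]
    rw [hfun] at h
    convert h using 1
    field_simp
    ring
  have h2 : HasDerivAt (fun x : ℝ => ω / x) (-(ω / ρ ^ 2)) ρ := by
    have h : HasDerivAt (fun x : ℝ => ω * x⁻¹) (ω * -(ρ ^ 2)⁻¹) ρ := (hasDerivAt_inv hρ).const_mul ω
    have hfun : (fun x : ℝ => ω * x⁻¹) = fun x : ℝ => ω / x := by
      funext x; rw [div_eq_mul_inv]
    rw [hfun] at h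
    convert h using 1
    field_simp
  have hp := (h1.sub h2).sub_const (ω / c)
  have h : HasDerivAt (fun x : ℝ => A * Real.exp (-(c / x)) * (c / x ^ 2 - ω / x - ω / c))
      (A * (Real.exp (-(c / ρ)) * (c / ρ ^ 2)) * (c / ρ ^ 2 - ω / ρ - ω / c) +
        A * Real.exp (-(c / ρ)) * (-(2 * c / ρ ^ 3) - -(ω / ρ ^ 2))) ρ := he.mul hp
  convert h using 1
  field_simp
  ring

lemma jwl_pow_exp (c : ℝ) (hc : 0 < c) (n : ℕ) :
    Tendsto (fun u : ℝ => u ^ n * Real.exp (-(c * u))) atTop (nhds 0) := by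
  have h := (Real.tendsto_pow_mul_exp_neg_atTop_nhds_zero n).comp
    (Tendsto.const_mul_atTop hc tendsto_id)
  have h2 := h.const_mul ((c ^ n)⁻¹)
  rw [mul_zero] at h2
  refine h2.congr fun u => ?_
  simp only [Function.comp, id]
  field_simp [mul_pow]
  ring

/-- The derivative of the JWL reference function, as an explicit formula. -/
noncomputable def jwlF (A1 A2 ω R1 R2 ρ0 : ℝ) : ℝ → ℝ :=
  fun ρ =>
    A1 * Real.exp (-(R1 * ρ0 / ρ)) * (R1 * ρ0 / ρ ^ 2 - ω / ρ - ω / (R1 * ρ0))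
      + A2 * Real.exp (-(R2 * ρ0 / ρ)) * (R2 * ρ0 / ρ ^ 2 - ω / ρ - ω / (R2 * ρ0))

lemma jwl_deriv_eq (A1 A2 ω R1 R2 ρ0 : ℝ) (h1 : R1 * ρ0 ≠ 0) (h2 : R2 * ρ0 ≠ 0)
    (ρ : ℝ) (hρ : ρ ≠ 0) :
    deriv (jwlH A1 A2 ω R1 R2 ρ0) ρ = jwlF A1 A2 ω R1 R2 ρ0 ρ :=
  ((jwl_hasDerivAt_term A1 ω (R1 * ρ0) ρ h1 hρ).add
    (jwl_hasDerivAt_term A2 ω (R2 * ρ0) ρ h2 hρ)).deriv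

lemma jwlF_hasDerivAt (A1 A2 ω R1 R2 ρ0 : ℝ) (h1 : R1 * ρ0 ≠ 0) (h2 : R2 * ρ0 ≠ 0)
    (ρ : ℝ) (hρ : ρ ≠ 0) :
    HasDerivAt (jwlF A1 A2 ω R1 R2 ρ0)
      (A1 * (R1 * ρ0) * Real.exp (-(R1 * ρ0 / ρ)) * ((R1 * ρ0) - (2 + ω) * ρ) / ρ ^ 4
        + A2 * (R2 * ρ0) * Real.exp (-(R2 * ρ0 / ρ)) * ((R2 * ρ0) - (2 + ω) * ρ) / ρ ^ 4) ρ :=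
  (jwl_hasDerivAt_Fterm A1 ω (R1 * ρ0) ρ h1 hρ).add
    (jwl_hasDerivAt_Fterm A2 ω (R2 * ρ0) ρ h2 hρ)

lemma jwlF_tendsto (A1 A2 ω R1 R2 ρ0 : ℝ) (h1 : 0 < R1 * ρ0) (h2 : 0 < R2 * ρ0) :
    Tendsto (jwlF A1 A2 ω R1 R2 ρ0) (nhdsWithin 0 (Ioi 0)) (nhds 0) := by
  set c1 := R1 * ρ0
  set c2 := R2 * ρ0
  have hg : Tendsto (fun u : ℝ =>
      A1 * Real.exp (-(c1 * u)) * (c1 * u ^ 2 - ω * u - ω / c1)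
        + A2 * Real.exp (-(c2 * u)) * (c2 * u ^ 2 - ω * u - ω / c2)) atTop (nhds 0) := by
    have t1 := (jwl_pow_exp c1 h1 2).const_mul (A1 * c1)
    have t2 := (jwl_pow_exp c1 h1 1).const_mul (A1 * ω)
    have t3 := (jwl_pow_exp c1 h1 0).const_mul (A1 * ω / c1)
    have t4 := (jwl_pow_exp c2 h2 2).const_mul (A2 * c2)
    have t5 := (jwl_pow_exp c2 h2 1).const_mul (A2 * ω)
    have t6 := (jwl_pow_exp c2 h2 0).const_mul (A2 * ω / c2)
    have h := ((t1.sub t2).sub t3).add ((t4.sub t5).sub t6)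
    simp only [mul_zero, sub_zero, add_zero] at h
    refine h.congr fun u => ?_
    ring
  have hinv : Tendsto (fun ρ : ℝ => ρ⁻¹) (nhdsWithin 0 (Ioi 0)) atTop :=
    tendsto_inv_nhdsGT_zero
  refine (hg.comp hinv).congr' ?_
  filter_upwards [self_mem_nhdsWithin] with ρ (hρ : 0 < ρ)
  simp only [Function.comp, jwlF]
  rw [div_eq_mul_inv c1 ρ, div_eq_mul_inv c2 ρ, div_eq_mul_inv c1 (ρ ^ 2),
    div_eq_mul_inv c2 (ρ ^ 2), div_eq_mul_inv ω ρ, ← inv_pow]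

lemma jwl_G_nonneg (A1 A2 ω R1 R2 ρ0 : ℝ) (hA1 : 0 < A1) (hA2 : 0 < A2) (hω : 0 < ω)
    (hR1 : 0 < R1) (hR2 : 0 < R2) (hρ0 : 0 < ρ0) (hR : R2 < R1)
    (x : ℝ) (hx : 0 < x)
    (hxM : x ≤ R1 * ρ0 / (2 + ω + A2 * R2 ^ 2 / (A1 * R1 * (R1 - R2)) *
      Real.exp (((2 + ω) * (R1 - R2) - R2) / R2))) :
    0 ≤ A1 * (R1 * ρ0) * Real.exp (-(R1 * ρ0 / x)) * ((R1 * ρ0) - (2 + ω) * x) / x ^ 4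
      + A2 * (R2 * ρ0) * Real.exp (-(R2 * ρ0 / x)) * ((R2 * ρ0) - (2 + ω) * x) / x ^ 4 := by
  have hR12 : (0 : ℝ) < R1 - R2 := sub_pos.mpr hR
  set E := Real.exp (((2 + ω) * (R1 - R2) - R2) / R2) with hE
  set α := A2 * R2 ^ 2 / (A1 * R1 * (R1 - R2)) * E with hα
  have hEpos : 0 < E := Real.exp_pos _
  have hαpos : 0 < α := by
    rw [hα]
    exact mul_pos (div_pos (by positivity) (by positivity)) hEpos
  set e1 := Real.exp (-(R1 * ρ0 / x)) with he1d
  set e2 := Real.exp (-(R2 * ρ0 / x)) with he2d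
  have he1 : 0 < e1 := Real.exp_pos _
  have he2 : 0 < e2 := Real.exp_pos _
  rw [← add_div]
  apply div_nonneg _ (by positivity)
  have hden : (0 : ℝ) < 2 + ω + α := by linarith
  have hxsum : x * (2 + ω + α) ≤ R1 * ρ0 := (le_div_iff₀ hden).mp hxM
  have h1 : α * x ≤ R1 * ρ0 - (2 + ω) * x := by nlinarith
  have hT1 : A1 * (R1 * ρ0) * e1 * (α * x) ≤ A1 * (R1 * ρ0) * e1 * ((R1 * ρ0) - (2 + ω) * x) :=
    mul_le_mul_of_nonneg_left h1 (by positivity)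
  rcases le_or_gt ((2 + ω) * x) (R2 * ρ0) with hcase | hcase
  · have t2 : 0 ≤ A2 * (R2 * ρ0) * e2 * ((R2 * ρ0) - (2 + ω) * x) := by
      apply mul_nonneg (by positivity) (by linarith)
    nlinarith [mul_pos (mul_pos (mul_pos hA1 (mul_pos hR1 hρ0)) he1) (mul_pos hαpos hx)]
  · set y := (2 + ω) * x - R2 * ρ0 with hy
    have hypos : 0 < y := by rw [hy]; linarith
    set k := (R1 - R2) / R2 with hk
    have hkpos : 0 < k := div_pos hR12 hR2
    set t := k * y / x with htd
    have htpos : 0 < t := by rw [htd]; positivity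
    have hkey : A2 * (R2 * ρ0) * e2 * y ≤ A1 * (R1 * ρ0) * e1 * (α * x) := by
      have he12 : e2 = e1 * Real.exp ((R1 - R2) * ρ0 / x) := by
        rw [he1d, he2d, ← Real.exp_add]
        congr 1
        field_simp
        ring
      have hexp' : Real.exp ((R1 - R2) * ρ0 / x) = Real.exp (k * (2 + ω)) * Real.exp (-t) := by
        rw [← Real.exp_add]
        congr 1
        rw [htd, hk, hy]
        field_simp
        ring
      have hb : t * Real.exp (-t) ≤ Real.exp (-1) := by
        have ht1 : t ≤ Real.exp (t - 1) := by
          have := Real.add_one_le_exp (t - 1); linarith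
        calc t * Real.exp (-t) ≤ Real.exp (t - 1) * Real.exp (-t) :=
              mul_le_mul_of_nonneg_right ht1 (Real.exp_pos (-t)).le
          _ = Real.exp (-1) := by rw [← Real.exp_add]; congr 1; ring
      have hyk : y = x * t / k := by
        rw [htd]
        field_simp
      have hye : y * Real.exp (-t) ≤ x / k * Real.exp (-1) := by
        rw [hyk]
        calc x * t / k * Real.exp (-t) = (x / k) * (t * Real.exp (-t)) := by ring
          _ ≤ (x / k) * Real.exp (-1) := by
              apply mul_le_mul_of_nonneg_left hb (by positivity)
      have he2y : e2 * y = e1 * Real.exp (k * (2 + ω)) * (y * Real.exp (-t)) := by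
        rw [he12, hexp']
        ring
      have hEfac : Real.exp (k * (2 + ω)) = E * Real.exp 1 := by
        rw [hE, hk, ← Real.exp_add]
        congr 1
        field_simp
        ring
      calc A2 * (R2 * ρ0) * e2 * y = A2 * (R2 * ρ0) * (e2 * y) := by ring
        _ = A2 * (R2 * ρ0) * (e1 * Real.exp (k * (2 + ω)) * (y * Real.exp (-t))) := by
            rw [he2y]
        _ ≤ A2 * (R2 * ρ0) * (e1 * Real.exp (k * (2 + ω)) * (x / k * Real.exp (-1))) := by
            apply mul_le_mul_of_nonneg_left _ (by positivity)
            exact mul_le_mul_of_nonneg_left hye (by positivity)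
        _ = A1 * (R1 * ρ0) * e1 * (α * x) := by
            rw [hEfac, hα, hk, Real.exp_neg]
            field_simp [(Real.exp_pos 1).ne']
    have hT2eq : A2 * (R2 * ρ0) * e2 * ((R2 * ρ0) - (2 + ω) * x)
        = -(A2 * (R2 * ρ0) * e2 * y) := by rw [hy]; ring
    linarith

/-- For the JWL reference function `h`, the derivative `h'` vanishes as
`ρ → 0⁺`, and `h'(ρ) ≥ 0` for every density
`0 < ρ ≤ R_1ρ_0/(2 + ω + α)`. -/
theorem jwl_h_first_deriv_nonneg
    (A1 A2 ω R1 R2 ρ0 : ℝ)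
    (hA1 : 0 < A1) (hA2 : 0 < A2) (hω : 0 < ω)
    (hR1 : 0 < R1) (hR2 : 0 < R2) (hρ0 : 0 < ρ0) (hR : R2 < R1) :
    Tendsto (deriv (jwlH A1 A2 ω R1 R2 ρ0)) (nhdsWithin 0 (Ioi 0))
        (nhds 0) ∧
      ∀ ρ : ℝ, 0 < ρ →
        ρ ≤ R1 * ρ0 / (2 + ω +
          A2 * R2 ^ 2 / (A1 * R1 * (R1 - R2)) *
            Real.exp (((2 + ω) * (R1 - R2) - R2) / R2)) →
        0 ≤ deriv (jwlH A1 A2 ω R1 R2 ρ0) ρ := by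
  have hc1 : (0 : ℝ) < R1 * ρ0 := mul_pos hR1 hρ0
  have hc2 : (0 : ℝ) < R2 * ρ0 := mul_pos hR2 hρ0
  have hR12 : (0 : ℝ) < R1 - R2 := sub_pos.mpr hR
  set M := R1 * ρ0 / (2 + ω +
      A2 * R2 ^ 2 / (A1 * R1 * (R1 - R2)) *
        Real.exp (((2 + ω) * (R1 - R2) - R2) / R2)) with hM
  have hαpos : 0 < A2 * R2 ^ 2 / (A1 * R1 * (R1 - R2)) *
      Real.exp (((2 + ω) * (R1 - R2) - R2) / R2) :=
    mul_pos (div_pos (by positivity) (by positivity)) (Real.exp_pos _)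
  have hMpos : 0 < M := by
    rw [hM]; exact div_pos hc1 (by linarith)
  have hFlim := jwlF_tendsto A1 A2 ω R1 R2 ρ0 hc1 hc2
  have hHF : ∀ ρ : ℝ, ρ ≠ 0 →
      deriv (jwlH A1 A2 ω R1 R2 ρ0) ρ = jwlF A1 A2 ω R1 R2 ρ0 ρ :=
    jwl_deriv_eq A1 A2 ω R1 R2 ρ0 hc1.ne' hc2.ne'
  constructor
  · refine hFlim.congr' ?_
    filter_upwards [self_mem_nhdsWithin] with ρ (hρ : 0 < ρ)
    exact (hHF ρ (ne_of_gt hρ)).symm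
  · intro ρ hρpos hρM
    have hdiffAt : ∀ x : ℝ, x ≠ 0 → HasDerivAt (jwlF A1 A2 ω R1 R2 ρ0)
        (A1 * (R1 * ρ0) * Real.exp (-(R1 * ρ0 / x)) * ((R1 * ρ0) - (2 + ω) * x) / x ^ 4
          + A2 * (R2 * ρ0) * Real.exp (-(R2 * ρ0 / x)) * ((R2 * ρ0) - (2 + ω) * x) / x ^ 4) x :=
      fun x hx => jwlF_hasDerivAt A1 A2 ω R1 R2 ρ0 hc1.ne' hc2.ne' x hx
    have hmono : MonotoneOn (jwlF A1 A2 ω R1 R2 ρ0) (Ioc 0 M) := by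
      apply monotoneOn_of_deriv_nonneg (convex_Ioc 0 M)
      · exact fun x hx =>
          ((hdiffAt x (ne_of_gt hx.1)).differentiableAt).continuousAt.continuousWithinAt
      · rw [interior_Ioc]
        exact fun x hx =>
          ((hdiffAt x (ne_of_gt hx.1)).differentiableAt).differentiableWithinAt
      · rw [interior_Ioc]
        intro x hx
        rw [(hdiffAt x (ne_of_gt hx.1)).deriv]
        exact jwl_G_nonneg A1 A2 ω R1 R2 ρ0 hA1 hA2 hω hR1 hR2 hρ0 hR x hx.1
          (hM ▸ hx.2.le)
    rw [hHF ρ (ne_of_gt hρpos)]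
    refine le_of_tendsto hFlim ?_
    filter_upwards [Ioo_mem_nhdsGT_of_mem (left_mem_Ico.2 hρpos)] with σ hσ
    exact hmono ⟨hσ.1, hσ.2.le.trans hρM⟩ ⟨hρpos, hρM⟩ hσ.2.le
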